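/- In the two-cell affine OCV-R parallel system, the SOC imbalance Δz(t) = z2(t) − z1(t) satisfies the scalar linear ODE Δz'(t) = −(1/τ)·Δz(t) + (κ/τ)·I, where 1/τ = (α/R_tot)·(1/Q1 + 1/Q2) and κ/τ = (1/R_tot)·(R2/Q1 − R1/Q2); equivalently, τ = (R_tot/α)·(Q1·Q2/Q_tot) and κ = (R2·Q2 − R1·Q1)/(α·Q_tot). -/

import Mathlib

/-- In the two-cell affine OCV-R parallel system, the SOC imbalance `Δz = z2 - z1`
satisfies `Δz' = -(1/τ)·Δz + (κ/τ)·I`, with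
`1/τ = (α/R_tot)·(1/Q1 + 1/Q2)` and `κ/τ = (1/R_tot)·(R2/Q1 - R1/Q2)`. -/
theorem stmt1 (Q1 Q2 R1 R2 α β I : ℝ)
    (hQ1 : 0 < Q1) (hQ2 : 0 < Q2) (hR1 : 0 < R1) (hR2 : 0 < R2)
    (hα : 0 < α) (hβ : 0 < β)
    (z1 z2 I1 I2 : ℝ → ℝ)
    (hvolt : ∀ t, (α * z1 t + β) - I1 t * R1 = (α * z2 t + β) - I2 t * R2)
    (hcurr : ∀ t, I1 t + I2 t = I)
    (hz1 : ∀ t, HasDerivAt z1 (-(I1 t) / Q1) t)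
    (hz2 : ∀ t, HasDerivAt z2 (-(I2 t) / Q2) t)
    (τ κ : ℝ)
    (hτ : τ = ((R1 + R2) / α) * (Q1 * Q2 / (Q1 + Q2)))
    (hκ : κ = (R2 * Q2 - R1 * Q1) / (α * (Q1 + Q2))) :
    1 / τ = (α / (R1 + R2)) * (1 / Q1 + 1 / Q2) ∧
    κ / τ = (1 / (R1 + R2)) * (R2 / Q1 - R1 / Q2) ∧
    ∀ t, HasDerivAt (fun s => z2 s - z1 s)
      (-(1 / τ) * (z2 t - z1 t) + (κ / τ) * I) t := by
  have hR : R1 + R2 ≠ 0 := by positivity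
  have hQ : Q1 + Q2 ≠ 0 := by positivity
  have hQ1' : Q1 ≠ 0 := ne_of_gt hQ1
  have hQ2' : Q2 ≠ 0 := ne_of_gt hQ2
  have hα' : α ≠ 0 := ne_of_gt hα
  refine ⟨?_, ?_, ?_⟩
  · rw [hτ]; field_simp; ring
  · rw [hτ, hκ]; field_simp
  · intro t
    have h := (hz2 t).sub (hz1 t)
    refine h.congr_deriv ?_
    have hv := hvolt t
    have hc := hcurr t
    have hI1 : I1 t = (α * (z1 t - z2 t) + I * R2) / (R1 + R2) := by
      field_simp
      linear_combination -hv + R2 * hc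
    have hI2 : I2 t = (α * (z2 t - z1 t) + I * R1) / (R1 + R2) := by
      field_simp
      linear_combination hv + R1 * hc
    rw [hτ, hκ, hI1, hI2]
    field_simp
    ring
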